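/- Let (R,m) be a Noetherian local ring, M a finite R-module with dim M = 1, and a a parameter for M. Then for n ≫ 0, λ(M/a^n M) = n·e_0((a),M) − e_1((a),M) with e_1((a),M) = −λ(H^0_m(M)). In particular e_1((a),M) ≤ 0, and e_1((a),M) = 0 if and only if M is Cohen–Macaulay. -/

import Mathlib

/-- `HasLength R M n` : the `R`-module `M` has finite length `n`. -/
def HasLength (R M : Type*) [Ring R] [AddCommGroup M] [Module R M] (n : ℕ) : Prop :=
  ∃ s : CompositionSeries (Submodule R M), s.head = ⊥ ∧ s.last = ⊤ ∧ s.length = n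

section LengthMachinery

variable {R : Type*} [Ring R] {M : Type*} [AddCommGroup M] [Module R M]

lemma covBy_coe_of_le {A : Submodule R M} {x y : {p : Submodule R M // p ≤ A}}
    (h : x ⋖ y) : (x : Submodule R M) ⋖ (y : Submodule R M) := by
  refine ⟨Subtype.coe_lt_coe.mpr h.1, fun z hxz hzy => ?_⟩
  exact h.2 (c := ⟨z, hzy.le.trans y.2⟩) (Subtype.coe_lt_coe.mp hxz) (Subtype.coe_lt_coe.mp hzy)

lemma covBy_coe_of_ge {A : Submodule R M} {x y : {p : Submodule R M // A ≤ p}}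
    (h : x ⋖ y) : (x : Submodule R M) ⋖ (y : Submodule R M) := by
  refine ⟨Subtype.coe_lt_coe.mpr h.1, fun z hxz hzy => ?_⟩
  exact h.2 (c := ⟨z, x.2.trans hxz.le⟩) (Subtype.coe_lt_coe.mp hxz) (Subtype.coe_lt_coe.mp hzy)

lemma HasLength.congr {N : Type*} [AddCommGroup N] [Module R N] (e : M ≃ₗ[R] N) {n : ℕ}
    (h : HasLength R M n) : HasLength R N n := by
  obtain ⟨s, sh, sl, sn⟩ := h
  let f : Submodule R M ≃o Submodule R N := Submodule.orderIsoMapComap e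
  refine ⟨⟨s.length, fun i => f (s i), fun i => ?_⟩, ?_, ?_, sn⟩
  · exact (apply_covBy_apply_iff f).mpr (s.step i)
  · show f s.head = ⊥
    rw [sh]; exact OrderIso.map_bot f
  · show f s.last = ⊤
    rw [sl]; exact OrderIso.map_top f

lemma HasLength.unique {m n : ℕ} (h1 : HasLength R M m) (h2 : HasLength R M n) : m = n := by
  obtain ⟨s, sh, sl, rfl⟩ := h1
  obtain ⟨t, th, tl, rfl⟩ := h2
  exact (CompositionSeries.jordan_holder s t (sh.trans th.symm) (sl.trans tl.symm)).length_eq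

lemma hasLength_zero [Subsingleton M] : HasLength R M 0 :=
  ⟨⟨0, fun _ => ⊥, fun i => i.elim0⟩, rfl, Subsingleton.elim _ _, rfl⟩

lemma top_eq_bot_of_hasLength_zero (h : HasLength R M 0) : (⊤ : Submodule R M) = ⊥ := by
  obtain ⟨s, sh, sl, s0⟩ := h
  have : s.last = s.head := by
    show s.toFun (Fin.last s.length) = s.toFun 0
    congr 1
    ext
    simp [s0]
  rw [this, sh] at sl
  exact sl.symm

lemma hasLength_add (A : Submodule R M) {la lb : ℕ}
    (hA : HasLength R A la) (hB : HasLength R (M ⧸ A) lb) : HasLength R M (la + lb) := by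
  obtain ⟨s, sh, sl, sn⟩ := hA
  obtain ⟨t, th, tl, tn⟩ := hB
  let s' : CompositionSeries (Submodule R M) :=
    ⟨s.length, fun i => Submodule.map A.subtype (s i), fun i =>
      covBy_coe_of_le (x := (Submodule.MapSubtype.orderIso A) (s i.castSucc))
        (y := (Submodule.MapSubtype.orderIso A) (s i.succ))
        ((apply_covBy_apply_iff (Submodule.MapSubtype.orderIso A)).mpr (s.step i))⟩
  let t' : CompositionSeries (Submodule R M) :=
    ⟨t.length, fun i => Submodule.comap A.mkQ (t i), fun i =>
      covBy_coe_of_ge (x := (Submodule.comapMkQRelIso A) (t i.castSucc))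
        (y := (Submodule.comapMkQRelIso A) (t i.succ))
        ((apply_covBy_apply_iff (Submodule.comapMkQRelIso A)).mpr (t.step i))⟩
  have hconn : s'.last = t'.head := by
    show Submodule.map A.subtype s.last = Submodule.comap A.mkQ t.head
    rw [sl, th]
    simp
  refine ⟨s'.smash t' hconn, ?_, ?_, ?_⟩
  · rw [RelSeries.head_smash]
    show Submodule.map A.subtype s.head = ⊥
    rw [sh]; simp
  · rw [RelSeries.last_smash]
    show Submodule.comap A.mkQ t.last = ⊤
    rw [tl]; simp
  · show s.length + t.length = la + lb
    rw [sn, tn]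

end LengthMachinery

section Artinian

open IsLocalRing

universe u v

variable {R : Type u} [CommRing R] [IsLocalRing R]

lemma isArtinian_of_torsionBy_max {X : Type v} [AddCommGroup X] [Module R X]
    [Module.Finite R X]
    (h : ∀ r ∈ maximalIdeal R, ∀ x : X, r • x = 0) : IsArtinian R X := by
  have hT : Module.IsTorsionBySet R X (maximalIdeal R : Set R) := fun x r => h r.1 r.2 x
  letI := hT.module
  haveI : IsScalarTower R (R ⧸ maximalIdeal R) X := hT.isScalarTower
  letI : Field (R ⧸ maximalIdeal R) := Ideal.Quotient.field _
  haveI : Module.Finite (R ⧸ maximalIdeal R) X :=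
    Module.Finite.of_restrictScalars_finite R _ _
  haveI hart : IsArtinian (R ⧸ maximalIdeal R) X := isArtinian_of_fg_of_artinian'
  let g : Submodule R X ↪o Submodule (R ⧸ maximalIdeal R) X := {
    toFun := fun S =>
      { carrier := S
        add_mem' := fun h1 h2 => S.add_mem h1 h2
        zero_mem' := S.zero_mem
        smul_mem' := by
          intro c x hx
          obtain ⟨r, rfl⟩ := Ideal.Quotient.mk_surjective c
          show (Ideal.Quotient.mk (maximalIdeal R) r) • x ∈ S
          rw [hT.mk_smul]
          exact S.smul_mem r hx }
    inj' := by
      intro S T hST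
      ext x
      exact SetLike.ext_iff.mp hST x
    map_rel_iff' := by
      intro S T
      constructor
      · intro hST x hx
        exact hST hx
      · intro hST x hx
        exact hST hx }
  exact ⟨(g.ltEmbedding).wellFounded hart.wf⟩

lemma isArtinian_of_pow_torsion [IsNoetherianRing R] :
    ∀ (k : ℕ) (X : Type v) [AddCommGroup X] [Module R X] [Module.Finite R X],
      (∀ r ∈ (maximalIdeal R) ^ k, ∀ x : X, r • x = 0) → IsArtinian R X := by
  intro k
  induction k with
  | zero =>
    intro X _ _ _ h
    haveI : Subsingleton X := by
      constructor
      intro x y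
      have hx := h 1 (by simp) x
      have hy := h 1 (by simp) y
      rw [one_smul] at hx hy
      rw [hx, hy]
    infer_instance
  | succ k ih =>
    intro X _ _ _ h
    haveI : IsNoetherian R X := isNoetherian_of_isNoetherianRing_of_finite R X
    set Y : Submodule R X := (maximalIdeal R) • ⊤ with hYdef
    have hbot : ((maximalIdeal R) ^ (k + 1) • ⊤ : Submodule R X) = ⊥ := by
      rw [eq_bot_iff]
      exact Submodule.smul_le.mpr fun r hr x _ => (Submodule.mem_bot R).mpr (h r hr x)
    haveI : Module.Finite R Y := Module.Finite.iff_fg.mpr (IsNoetherian.noetherian Y)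
    have hY : ∀ r ∈ (maximalIdeal R) ^ k, ∀ y : Y, r • y = (0 : Y) := by
      intro r hr y
      have hmem : r • (y : X) ∈ ((maximalIdeal R) ^ k • Y : Submodule R X) :=
        Submodule.smul_mem_smul hr y.2
      have heq : ((maximalIdeal R) ^ k • Y : Submodule R X) = ⊥ := by
        rw [hYdef, ← Submodule.smul_assoc, smul_eq_mul, ← pow_succ, hbot]
      rw [heq, Submodule.mem_bot] at hmem
      exact Subtype.ext hmem
    have hA1 : IsArtinian R Y := ih Y hY
    have hA2 : IsArtinian R (X ⧸ Y) := by
      apply isArtinian_of_torsionBy_max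
      intro r hr z
      obtain ⟨x, rfl⟩ := Submodule.Quotient.mk_surjective Y z
      rw [← Submodule.Quotient.mk_smul, Submodule.Quotient.mk_eq_zero]
      exact Submodule.smul_mem_smul hr Submodule.mem_top
    exact (isArtinian_iff_submodule_quotient Y).mpr ⟨hA1, hA2⟩

end Artinian

section Mul

variable {R : Type*} [CommRing R] {M : Type*} [AddCommGroup M] [Module R M]

lemma mem_span_smul_top {b : R} {x : M} :
    x ∈ (Ideal.span {b} • ⊤ : Submodule R M) ↔ ∃ y : M, b • y = x := by
  constructor
  · intro hx
    refine Submodule.smul_induction_on hx ?_ ?_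
    · intro r hr y _
      obtain ⟨c, rfl⟩ := Ideal.mem_span_singleton.mp hr
      exact ⟨c • y, by rw [smul_smul, mul_comm]⟩
    · rintro x y ⟨x', rfl⟩ ⟨y', rfl⟩
      exact ⟨x' + y', by rw [smul_add]⟩
  · rintro ⟨y, rfl⟩
    exact Submodule.smul_mem_smul (Ideal.mem_span_singleton_self _) Submodule.mem_top

lemma hasLength_quot_pow_smul {a : R} (hreg : IsSMulRegular M a) {e0 : ℕ}
    (he : HasLength R (M ⧸ (Ideal.span {a} • ⊤ : Submodule R M)) e0) :
    ∀ n : ℕ, HasLength R (M ⧸ (Ideal.span {a ^ n} • ⊤ : Submodule R M)) (n * e0) := by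
  intro n
  induction n with
  | zero =>
    have htop : (Ideal.span {a ^ 0} • ⊤ : Submodule R M) = ⊤ := by
      rw [pow_zero, Ideal.span_singleton_one, Submodule.top_smul]
    haveI : Subsingleton (M ⧸ (Ideal.span {a ^ 0} • ⊤ : Submodule R M)) :=
      Submodule.Quotient.subsingleton_iff.mpr htop
    rw [Nat.zero_mul]
    exact hasLength_zero
  | succ n ihn =>
    set T1 : Submodule R M := Ideal.span {a} • ⊤ with hT1
    set Tn : Submodule R M := Ideal.span {a ^ n} • ⊤ with hTn
    set Tn1 : Submodule R M := Ideal.span {a ^ (n + 1)} • ⊤ with hTn1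
    have hle : Tn1 ≤ Tn := by
      intro x hx
      obtain ⟨y, rfl⟩ := mem_span_smul_top.mp hx
      exact mem_span_smul_top.mpr ⟨a • y, by rw [smul_smul, ← pow_succ]⟩
    let g : M →ₗ[R] (M ⧸ Tn1) := Tn1.mkQ.comp (LinearMap.lsmul R M (a ^ n))
    have hker : LinearMap.ker g = T1 := by
      ext x
      simp only [g, LinearMap.mem_ker, LinearMap.comp_apply, LinearMap.lsmul_apply,
        Submodule.mkQ_apply, Submodule.Quotient.mk_eq_zero]
      constructor
      · intro hx
        obtain ⟨y, hy⟩ := mem_span_smul_top.mp hx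
        have : a ^ n • (a • y) = a ^ n • x := by
          rw [smul_smul, ← pow_succ, hy]
        exact mem_span_smul_top.mpr ⟨y, hreg.pow n this⟩
      · intro hx
        obtain ⟨y, rfl⟩ := mem_span_smul_top.mp hx
        exact mem_span_smul_top.mpr ⟨y, by rw [smul_smul, ← pow_succ]⟩
    have hrange : LinearMap.range g = Submodule.map Tn1.mkQ Tn := by
      ext z
      constructor
      · rintro ⟨x, rfl⟩
        exact ⟨a ^ n • x, mem_span_smul_top.mpr ⟨x, rfl⟩, rfl⟩
      · rintro ⟨x, hx, rfl⟩
        obtain ⟨y, rfl⟩ := mem_span_smul_top.mp hx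
        exact ⟨y, rfl⟩
    have hB1 : HasLength R (Submodule.map Tn1.mkQ Tn) e0 := by
      have e1 : (M ⧸ T1) ≃ₗ[R] (Submodule.map Tn1.mkQ Tn) := by
        rw [← hker, ← hrange]
        exact g.quotKerEquivRange
      exact HasLength.congr e1 he
    have hB2 : HasLength R ((M ⧸ Tn1) ⧸ (Submodule.map Tn1.mkQ Tn)) (n * e0) := by
      have e2 : (M ⧸ Tn) ≃ₗ[R] ((M ⧸ Tn1) ⧸ (Submodule.map Tn1.mkQ Tn)) :=
        (Submodule.quotientQuotientEquivQuotient Tn1 Tn hle).symm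
      exact HasLength.congr e2 ihn
    have hfin := hasLength_add (Submodule.map Tn1.mkQ Tn) hB1 hB2
    have harith : e0 + n * e0 = (n + 1) * e0 := by ring
    rw [harith] at hfin
    exact hfin

end Mul

/-- Let `(R, m)` be a Noetherian local ring, `M` a finite `R`-module with
`dim M = 1`, and `a` a parameter for `M`.  Then for `n ≫ 0`,
`λ(M/aⁿM) = n·e₀((a),M) − e₁((a),M)` where the Chern number is `e₁((a),M) = −λ(H⁰_m(M))`.
In particular `e₁((a),M) ≤ 0`, and `e₁((a),M) = 0` if and only if `M` is Cohen–Macaulay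
(for a `1`-dimensional module this means the existence of an `M`-regular element in `m`). -/
theorem chern_number_dim_one {R M : Type*} [CommRing R] [IsNoetherianRing R]
    [IsLocalRing R] [AddCommGroup M] [Module R M] [Module.Finite R M]
    (hdim : ringKrullDim (R ⧸ Module.annihilator R M) = 1)
    (N : Submodule R M)
    (hN : ∀ x : M, x ∈ N ↔ ∃ k : ℕ, ∀ r ∈ (IsLocalRing.maximalIdeal R) ^ k, r • x = 0)
    (a : R) (ha : a ∈ IsLocalRing.maximalIdeal R)
    (hpar : ringKrullDim (R ⧸ Module.annihilator R (M ⧸ (Ideal.span {a} • ⊤ : Submodule R M)))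
      = 0)
    (lN : ℕ) (hlN : HasLength R N lN) :
    ∃ e0 : ℕ, ∃ n0 : ℕ,
      (∀ n ≥ n0, ∃ l : ℕ,
        HasLength R (M ⧸ (Ideal.span {a ^ n} • ⊤ : Submodule R M)) l ∧
        (l : ℤ) = n * e0 - (-(lN : ℤ))) ∧
      (-(lN : ℤ) ≤ 0) ∧
      ((-(lN : ℤ) = 0) ↔ ∃ b ∈ IsLocalRing.maximalIdeal R, IsSMulRegular M b) := by
  classical
  haveI : IsNoetherian R M := isNoetherian_of_isNoetherianRing_of_finite R M
  set m : Ideal R := IsLocalRing.maximalIdeal R with hmdef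
  set T1 : Submodule R M := Ideal.span {a} • ⊤ with hT1def
  set J : Ideal R := Module.annihilator R (M ⧸ T1) with hJdef
  -- every prime over J is m
  have hpm : ∀ p : Ideal R, p.IsPrime → J ≤ p → p = m := by
    intro p hp hJp
    have hple : p ≤ m := IsLocalRing.le_maximalIdeal hp.ne_top
    by_contra hne
    have hkerJ : RingHom.ker (Ideal.Quotient.mk J) = J := Ideal.mk_ker
    haveI hP0 : (p.map (Ideal.Quotient.mk J)).IsPrime :=
      Ideal.map_isPrime_of_surjective Ideal.Quotient.mk_surjective (by rw [hkerJ]; exact hJp)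
    haveI hP1 : (m.map (Ideal.Quotient.mk J)).IsPrime :=
      Ideal.map_isPrime_of_surjective Ideal.Quotient.mk_surjective
        (by rw [hkerJ]; exact hJp.trans hple)
    have hcomap : ∀ q : Ideal R, J ≤ q →
        (q.map (Ideal.Quotient.mk J)).comap (Ideal.Quotient.mk J) = q := by
      intro q hq
      rw [Ideal.comap_map_of_surjective _ Ideal.Quotient.mk_surjective,
        ← RingHom.ker_eq_comap_bot, hkerJ, sup_eq_left.mpr hq]
    have hlt : p.map (Ideal.Quotient.mk J) < m.map (Ideal.Quotient.mk J) := by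
      refine lt_of_le_of_ne (Ideal.map_mono hple) fun heq => hne ?_
      have h2 := congrArg (Ideal.comap (Ideal.Quotient.mk J)) heq
      rwa [hcomap p hJp, hcomap m (hJp.trans hple)] at h2
    let P0 : PrimeSpectrum (R ⧸ J) := ⟨_, hP0⟩
    let P1 : PrimeSpectrum (R ⧸ J) := ⟨_, hP1⟩
    have hPlt : P0 < P1 := hlt
    let c : LTSeries (PrimeSpectrum (R ⧸ J)) :=
      ⟨1, ![P0, P1], fun i => by fin_cases i; simpa using hPlt⟩
    have hlen : (c.length : WithBot ℕ∞) ≤ ringKrullDim (R ⧸ J) :=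
      Order.LTSeries.length_le_krullDim c
    rw [hpar] at hlen
    have : c.length = 1 := rfl
    rw [this] at hlen
    norm_num at hlen
  have hrad : m ≤ J.radical := by
    intro r hr
    rw [Ideal.radical_eq_sInf]
    refine Submodule.mem_sInf.mpr ?_
    rintro p ⟨hJp, hp⟩
    rw [hpm p hp hJp]
    exact hr
  obtain ⟨k, hk⟩ := Ideal.exists_pow_le_of_le_radical_of_fg hrad (IsNoetherian.noetherian m)
  have hkM : ∀ r ∈ m ^ k, ∀ x : M, r • x ∈ T1 := by
    intro r hr x
    have hrJ : r ∈ J := hk hr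
    have h2 := Module.mem_annihilator.mp hrJ (Submodule.Quotient.mk x)
    rwa [← Submodule.Quotient.mk_smul, Submodule.Quotient.mk_eq_zero] at h2
  -- kernels of powers of a
  let K : ℕ →o Submodule R M := ⟨fun t => LinearMap.ker (LinearMap.lsmul R M (a ^ t)), by
    intro i j hij x hx
    simp only [LinearMap.mem_ker, LinearMap.lsmul_apply] at hx ⊢
    obtain ⟨d, rfl⟩ : ∃ d, j = i + d := ⟨j - i, by omega⟩
    rw [pow_add, mul_comm, mul_smul, hx, smul_zero]⟩
  obtain ⟨s0, hs0⟩ := monotone_stabilizes_iff_noetherian.mpr inferInstance K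
  have hKmem : ∀ t (x : M), x ∈ K t ↔ a ^ t • x = 0 := fun t x => by
    show x ∈ LinearMap.ker (LinearMap.lsmul R M (a ^ t)) ↔ _
    simp [K, LinearMap.mem_ker]
  have hKle : ∀ j, K j ≤ K s0 := by
    intro j
    rcases le_total j s0 with h | h
    · exact K.monotone h
    · exact le_of_eq (hs0 j h).symm
  -- N is the kernel of a ^ s0
  have hNK : N = K s0 := by
    apply le_antisymm
    · intro x hx
      obtain ⟨j, hj⟩ := (hN x).mp hx
      exact hKle j ((hKmem j x).mpr (hj (a ^ j) (Ideal.pow_mem_pow ha j)))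
    · intro x hx
      refine (hN x).mpr ⟨k * s0, ?_⟩
      have claim : ∀ s : ℕ, ∀ r ∈ m ^ (k * s), ∀ w ∈ K s0,
          ∃ y ∈ K s0, r • w = a ^ s • y := by
        intro s
        induction s with
        | zero =>
          intro r _ w hwK
          exact ⟨r • w, Submodule.smul_mem _ r hwK, by rw [pow_zero, one_smul]⟩
        | succ s ihs =>
          intro r hr w hwK
          rw [show k * (s + 1) = k * s + k by ring, pow_add] at hr
          refine Submodule.mul_induction_on hr ?_ ?_
          · intro r1 hr1 r2 hr2
            obtain ⟨z, hz⟩ := mem_span_smul_top.mp (hkM r2 hr2 w)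
            have hzK : z ∈ K s0 := by
              have h1 : a ^ s0 • (r2 • w) = 0 := by
                rw [smul_comm, (hKmem s0 w).mp hwK, smul_zero]
              have h2 : a ^ (s0 + 1) • z = 0 := by
                rw [pow_succ, mul_smul, hz, h1]
              exact hKle (s0 + 1) ((hKmem _ z).mpr h2)
            obtain ⟨y, hyK, hy⟩ := ihs r1 hr1 z hzK
            refine ⟨y, hyK, ?_⟩
            calc (r1 * r2) • w = r1 • (r2 • w) := mul_smul r1 r2 w
              _ = r1 • (a • z) := by rw [hz]
              _ = a • (r1 • z) := (smul_comm a r1 z).symm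
              _ = a • (a ^ s • y) := by rw [hy]
              _ = a ^ (s + 1) • y := by rw [smul_smul, ← pow_succ']
          · rintro u v ⟨y1, hy1K, hy1⟩ ⟨y2, hy2K, hy2⟩
            exact ⟨y1 + y2, Submodule.add_mem _ hy1K hy2K,
              by rw [add_smul, smul_add, hy1, hy2]⟩
      intro r hr
      obtain ⟨y, hyK, hy⟩ := claim s0 r hr x hx
      rw [hy, (hKmem s0 y).mp hyK]
  -- disjointness
  have hdisj : ∀ n, s0 ≤ n → (Ideal.span {a ^ n} • ⊤ : Submodule R M) ⊓ N = ⊥ := by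
    intro n hn
    rw [eq_bot_iff]
    rintro x ⟨hx1, hx2⟩
    obtain ⟨y, rfl⟩ := mem_span_smul_top.mp hx1
    rw [hNK] at hx2
    have h1 : a ^ (s0 + n) • y = 0 := by
      rw [pow_add, mul_smul]
      exact (hKmem s0 _).mp hx2
    have h2 : y ∈ K s0 := hKle (s0 + n) ((hKmem _ y).mpr h1)
    have h3 : a ^ s0 • y = 0 := (hKmem s0 y).mp h2
    have h4 : a ^ n • y = 0 := by
      have h5 : a ^ n = a ^ (n - s0) * a ^ s0 := by
        rw [← pow_add]
        congr 1
        omega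
      rw [h5, mul_smul, h3, smul_zero]
    simp [h4]
  -- regularity of a on M ⧸ N
  have hreg0 : ∀ z : M ⧸ N, a • z = 0 → z = 0 := by
    intro z hz
    obtain ⟨w, rfl⟩ := Submodule.Quotient.mk_surjective N z
    rw [← Submodule.Quotient.mk_smul, Submodule.Quotient.mk_eq_zero] at hz
    rw [Submodule.Quotient.mk_eq_zero]
    rw [hNK] at hz ⊢
    have h6 : a ^ (s0 + 1) • w = 0 := by
      rw [pow_succ, mul_comm, mul_smul]
      have := (hKmem s0 (a • w)).mp hz
      rw [smul_comm] at this
      rwa [smul_comm]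
    exact hKle (s0 + 1) ((hKmem _ w).mpr h6)
  have hreg : IsSMulRegular (M ⧸ N) a := by
    intro u v huv
    have h7 : a • (u - v) = 0 := by
      show a • (u - v) = 0
      rw [smul_sub]
      rw [show a • u = a • v from huv]
      rw [sub_self]
    exact sub_eq_zero.mp (hreg0 _ h7)
  -- finiteness of the base quotient
  haveI : Module.Finite R (M ⧸ N) := Module.Finite.quotient R N
  set P1 : Submodule R (M ⧸ N) := Ideal.span {a} • ⊤ with hP1def
  have htor1 : ∀ r ∈ m ^ k, ∀ z : ((M ⧸ N) ⧸ P1), r • z = 0 := by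
    intro r hr z
    obtain ⟨z', rfl⟩ := Submodule.Quotient.mk_surjective P1 z
    obtain ⟨w, rfl⟩ := Submodule.Quotient.mk_surjective N z'
    rw [← Submodule.Quotient.mk_smul, Submodule.Quotient.mk_eq_zero]
    obtain ⟨u, hu⟩ := mem_span_smul_top.mp (hkM r hr w)
    refine mem_span_smul_top.mpr ⟨Submodule.Quotient.mk u, ?_⟩
    rw [← Submodule.Quotient.mk_smul, hu, Submodule.Quotient.mk_smul]
  haveI hart1 : IsArtinian R ((M ⧸ N) ⧸ P1) := isArtinian_of_pow_torsion k _ htor1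
  obtain ⟨cs, csh, csl⟩ := exists_compositionSeries_of_isNoetherian_isArtinian R ((M ⧸ N) ⧸ P1)
  have he0 : HasLength R ((M ⧸ N) ⧸ P1) cs.length := ⟨cs, csh, csl, rfl⟩
  refine ⟨cs.length, s0, ?_, by omega, ?_⟩
  · -- the main length computation
    intro n hn
    have hQn : HasLength R ((M ⧸ N) ⧸ (Ideal.span {a ^ n} • ⊤ : Submodule R (M ⧸ N)))
        (n * cs.length) := hasLength_quot_pow_smul hreg he0 n
    set Tn : Submodule R M := Ideal.span {a ^ n} • ⊤ with hTndef
    set A : Submodule R (M ⧸ Tn) := Submodule.map Tn.mkQ N with hAdef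
    have hAlen : HasLength R A lN := by
      let f : N →ₗ[R] (M ⧸ Tn) := Tn.mkQ.comp N.subtype
      have hfinj : Function.Injective f := by
        intro x y hxy
        have hxy' : (Submodule.Quotient.mk (x : M) : M ⧸ Tn) = Submodule.Quotient.mk (y : M) :=
          hxy
        have hsub : (x : M) - y ∈ Tn := (Submodule.Quotient.eq Tn).mp hxy'
        have hsub2 : (x : M) - y ∈ Tn ⊓ N := ⟨hsub, Submodule.sub_mem N x.2 y.2⟩
        rw [hdisj n hn] at hsub2
        exact Subtype.ext (sub_eq_zero.mp ((Submodule.mem_bot R).mp hsub2))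
      have hfrange : LinearMap.range f = A := by
        rw [hAdef]
        show LinearMap.range (Tn.mkQ.comp N.subtype) = _
        rw [LinearMap.range_comp, Submodule.range_subtype]
      exact HasLength.congr ((LinearEquiv.ofInjective f hfinj).trans
        (LinearEquiv.ofEq _ _ hfrange)) hlN
    have hQlen : HasLength R ((M ⧸ Tn) ⧸ A) (n * cs.length) := by
      have hA' : A = Submodule.map Tn.mkQ (Tn ⊔ N) := by
        rw [Submodule.map_sup, Submodule.mkQ_map_self, bot_sup_eq]
      have e2 : ((M ⧸ Tn) ⧸ A) ≃ₗ[R] M ⧸ (Tn ⊔ N) := by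
        rw [hA']
        exact Submodule.quotientQuotientEquivQuotient Tn (Tn ⊔ N) le_sup_left
      have hmap : Submodule.map N.mkQ (Tn ⊔ N) =
          (Ideal.span {a ^ n} • ⊤ : Submodule R (M ⧸ N)) := by
        rw [Submodule.map_sup, Submodule.mkQ_map_self, sup_bot_eq, hTndef,
          Submodule.map_smul'', Submodule.map_top, Submodule.range_mkQ]
      have e3 : ((M ⧸ N) ⧸ (Ideal.span {a ^ n} • ⊤ : Submodule R (M ⧸ N))) ≃ₗ[R]
          M ⧸ (Tn ⊔ N) := by
        rw [← hmap]
        exact Submodule.quotientQuotientEquivQuotient N (Tn ⊔ N) le_sup_right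
      exact HasLength.congr (e3.trans e2.symm) hQn
    refine ⟨lN + n * cs.length, hasLength_add A hAlen hQlen, by push_cast; ring⟩
  · constructor
    · intro h0
      have hlN0 : lN = 0 := by omega
      have hNbot : N = ⊥ := by
        rw [eq_bot_iff]
        intro x hx
        have h1 : (⊤ : Submodule R N) = ⊥ := top_eq_bot_of_hasLength_zero (hlN0 ▸ hlN)
        have h2 : (⟨x, hx⟩ : N) ∈ (⊥ : Submodule R N) := h1 ▸ Submodule.mem_top
        have h3 : (⟨x, hx⟩ : N) = 0 := (Submodule.mem_bot R).mp h2
        have h4 : x = 0 := congrArg Subtype.val h3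
        simp [h4]
      refine ⟨a, ha, ?_⟩
      intro u v huv
      have h7 : a • (u - v) = 0 := by
        rw [smul_sub, show a • u = a • v from huv, sub_self]
      have h8 : u - v ∈ K 1 := (hKmem 1 _).mpr (by rwa [pow_one])
      have h9 : u - v ∈ N := by
        rw [hNK]
        exact hKle 1 h8
      rw [hNbot] at h9
      exact sub_eq_zero.mp ((Submodule.mem_bot R).mp h9)
    · rintro ⟨b, hb, hbreg⟩
      have hNall : ∀ x ∈ N, x = 0 := by
        intro x hx
        obtain ⟨j, hj⟩ := (hN x).mp hx
        have hbx : b ^ j • x = 0 := hj _ (Ideal.pow_mem_pow hb j)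
        exact (hbreg.pow j) (show b ^ j • x = b ^ j • 0 by rw [hbx, smul_zero])
      haveI : Subsingleton N :=
        ⟨fun x y => Subtype.ext (by rw [hNall x.1 x.2, hNall y.1 y.2])⟩
      have hlN0 : lN = 0 := HasLength.unique hlN hasLength_zero
      simp [hlN0]
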